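/- Let β>0, ξ>0, μ>0, γ>0, ρ>0, κ>0, ν>0, α>1, ω>1 with α+ω = αω. Let W* > 0 be a root of the quadratic f(w) = A w² + B w + C (with A, B, C as in the equilibrium quadratic of the SIRWJS system), and define S* = (γ+μ)/β - νξ(γ+μ)W*/(ρ+μ), I* = μ(1/(γ+μ) - 1/β) + (ωκ/(γ+μ) + μνξ/(ρ+μ))W*, J* = νβI*W*/(ρ+μ - νβξW*). Then (S*,I*,W*,J*) is a solution of the equilibrium equations with all components positive (and hence lies in D = {(s,i,w,j) ∈ ℝ≥0⁴ : s+i+w+j ≤ 1}) if and only if max{0, W̲} < W* < W̄, where W̄ = (ρ+μ)/(νβξ) and W̲ = μ(-β+γ+μ)(ρ+μ)/(β(μνξ(γ+μ) + ωκ(ρ+μ))). -/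

import Mathlib

set_option maxHeartbeats 2000000


/-- A positive root `W*` of the equilibrium quadratic yields, via the explicit
formulas for `S*`, `I*`, `J*`, a solution of the equilibrium equations of the
reduced SIRWJS system with all components positive (hence lying in the feasible
region `D`) if and only if `max {0, W̲} < W* < W̄`. -/
theorem sirwjs_equilibrium_feasibility_characterization
    (β ξ μ γ ρ κ ν α ω : ℝ)
    (hβ : 0 < β) (hξ : 0 < ξ) (hμ : 0 < μ) (hγ : 0 < γ) (hρ : 0 < ρ)
    (hκ : 0 < κ) (hν : 0 < ν) (hα : 1 < α) (hω : 1 < ω)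
    (hαω : α + ω = α * ω)
    (η Q₀ Q₁ Q₂ A B C : ℝ)
    (hη : η = α + ω)
    (hQ₀ : Q₀ = α * κ * γ)
    (hQ₁ : Q₁ = ((γ + μ) * (η * κ + μ) + η * κ ^ 2) * (ρ + μ))
    (hQ₂ : Q₂ = α * κ + ρ + μ)
    (hA : A = ν * β ^ 2 * (-ν * ξ ^ 2 * (γ + μ) * Q₀ + ξ * Q₁
      + (α * κ * (ρ + μ) - ν * ξ * μ * (γ + μ) - η * κ * (ρ + μ)) * Q₂))
    (hB : B = β * (ρ + μ) * ((ν * ξ * (γ + μ) - ν * ξ * (β - γ - μ)) * Q₀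
      - Q₁ - ν * μ * (β - γ - μ) * Q₂))
    (hC : C = (β - γ - μ) * (ρ + μ) ^ 2 * Q₀)
    (W : ℝ) (hW0 : 0 < W) (hroot : A * W ^ 2 + B * W + C = 0)
    (S I J Wlow Wup : ℝ)
    (hS : S = (γ + μ) / β - ν * ξ * (γ + μ) / (ρ + μ) * W)
    (hI : I = μ * (1 / (γ + μ) - 1 / β) + (ω * κ / (γ + μ) + μ * ν * ξ / (ρ + μ)) * W)
    (hJ : J = ν * β * I * W / (ρ + μ - ν * β * ξ * W))
    (hWup : Wup = (ρ + μ) / (ν * β * ξ))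
    (hWlow : Wlow = μ * (-β + γ + μ) * (ρ + μ)
      / (β * (μ * ν * ξ * (γ + μ) + ω * κ * (ρ + μ)))) :
    ((-β * (I + ξ * J) * S + ω * κ * W + μ * (1 - S) = 0 ∧
      β * (I + ξ * J) * S - (γ + μ) * I = 0 ∧
      α * κ * (1 - S - I - W - J) - ω * κ * W - ν * β * (I + ξ * J) * W - μ * W = 0 ∧
      ν * β * (I + ξ * J) * W - (μ + ρ) * J = 0) ∧
      0 < S ∧ 0 < I ∧ 0 < J ∧ S + I + W + J ≤ 1)
    ↔ (max 0 Wlow < W ∧ W < Wup) := by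
  have hω0 : (0:ℝ) < ω := by linarith
  have hα0 : (0:ℝ) < α := by linarith
  have hgm : (0:ℝ) < γ + μ := by linarith
  have hrm : (0:ℝ) < ρ + μ := by linarith
  have hgm' : γ + μ ≠ 0 := ne_of_gt hgm
  have hrm' : ρ + μ ≠ 0 := ne_of_gt hrm
  have hβ' : β ≠ 0 := ne_of_gt hβ
  have hc : (0:ℝ) < μ * ν * ξ * (γ + μ) + ω * κ * (ρ + μ) := by
    have h1 : 0 < μ * ν * ξ * (γ + μ) := by positivity
    have h2 : 0 < ω * κ * (ρ + μ) := by positivity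
    linarith
  have hc' : μ * ν * ξ * (γ + μ) + ω * κ * (ρ + μ) ≠ 0 := ne_of_gt hc
  -- I = c * (W - Wlow)
  have hIW : I = (μ * ν * ξ * (γ + μ) + ω * κ * (ρ + μ)) / ((γ + μ) * (ρ + μ)) * (W - Wlow) := by
    rw [hI, hWlow]
    field_simp
    ring
  have hcpos : (0:ℝ) < (μ * ν * ξ * (γ + μ) + ω * κ * (ρ + μ)) / ((γ + μ) * (ρ + μ)) := by
    apply div_pos hc (by positivity)
  have hIiff : 0 < I ↔ Wlow < W := by
    rw [hIW, mul_pos_iff_of_pos_left hcpos, sub_pos]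
  have hnbx : (0:ℝ) < ν * β * ξ := by positivity
  have hDiff : W < Wup ↔ 0 < ρ + μ - ν * β * ξ * W := by
    rw [hWup, lt_div_iff₀ hnbx, mul_comm]
    constructor <;> intro h <;> linarith
  have hSD : S = (γ + μ) / (β * (ρ + μ)) * (ρ + μ - ν * β * ξ * W) := by
    rw [hS]; field_simp
  constructor
  · rintro ⟨-, hSpos, hIpos, hJpos, -⟩
    have hWlowW : Wlow < W := hIiff.mp hIpos
    have hnum : 0 < ν * β * I * W := by positivity
    have hD : 0 < ρ + μ - ν * β * ξ * W := by
      rcases lt_trichotomy (ρ + μ - ν * β * ξ * W) 0 with h | h | h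
      · exfalso
        have : J < 0 := by rw [hJ]; exact div_neg_of_pos_of_neg hnum h
        linarith
      · exfalso
        rw [hJ, h, div_zero] at hJpos
        exact lt_irrefl 0 hJpos
      · exact h
    exact ⟨max_lt hW0 hWlowW, hDiff.mpr hD⟩
  · rintro ⟨hmax, hup⟩
    have hWlowW : Wlow < W := lt_of_le_of_lt (le_max_right 0 Wlow) hmax
    have hD : 0 < ρ + μ - ν * β * ξ * W := hDiff.mp hup
    have hD' : ρ + μ - ν * β * ξ * W ≠ 0 := ne_of_gt hD
    have hIpos : 0 < I := hIiff.mpr hWlowW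
    have hSpos : 0 < S := by rw [hSD]; positivity
    have hJpos : 0 < J := by rw [hJ]; positivity
    -- cleared-denominator forms
    have hSe : S * (β * (ρ + μ)) = (γ + μ) * (ρ + μ - ν * β * ξ * W) := by
      rw [hS]; field_simp
    have hIe : I * (β * (γ + μ) * (ρ + μ))
        = μ * (β - γ - μ) * (ρ + μ) + (ω * κ * β * (ρ + μ) + μ * ν * ξ * β * (γ + μ)) * W := by
      rw [hI]; field_simp; ring
    have hJe : J * (ρ + μ - ν * β * ξ * W) = ν * β * I * W := by
      rw [hJ, div_mul_cancel₀ _ hD']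
    have hIJ : I + ξ * J = I * (ρ + μ) / (ρ + μ - ν * β * ξ * W) := by
      rw [eq_div_iff hD', add_mul, mul_assoc ξ, hJe]; ring
    have eq2 : β * (I + ξ * J) * S - (γ + μ) * I = 0 := by
      rw [hIJ, hSD]; generalize ρ + μ - ν * β * ξ * W = D at hD' ⊢; field_simp; ring
    have eq4 : ν * β * (I + ξ * J) * W - (μ + ρ) * J = 0 := by
      rw [hIJ, hJ]; field_simp; ring
    have eq1 : -β * (I + ξ * J) * S + ω * κ * W + μ * (1 - S) = 0 := by
      have hbr : β * (ρ + μ) ≠ 0 := by positivity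
      have eq1e : (-β * (I + ξ * J) * S + ω * κ * W + μ * (1 - S)) * (β * (ρ + μ)) = 0 := by
        linear_combination (-(β * (ρ + μ))) * eq2 + (-1 : ℝ) * hIe + (-μ) * hSe
      exact (mul_eq_zero.mp eq1e).resolve_right hbr
    have key : (α * κ * (1 - S - I - W - J) - ω * κ * W - ν * β * (I + ξ * J) * W - μ * W)
        * (β * (γ + μ) * (ρ + μ) * (ρ + μ - ν * β * ξ * W)) = A * W ^ 2 + B * W + C := by
      rw [hA, hB, hC, hQ₀, hQ₁, hQ₂, hη]
      linear_combination
        (-(α * κ) * (γ + μ) * (ρ + μ - ν * β * ξ * W)) * hSe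
        + (-(α * κ) * (ρ + μ - ν * β * ξ * W) - ν * β * (ρ + μ) * W - α * κ * ν * β * W) * hIe
        + (-(β * (γ + μ) * (ρ + μ)) * (ν * β * ξ * W + α * κ)) * hJe
        + (β * κ ^ 2 * W * (ρ + μ) * (ρ + μ - ν * β * ξ * W)) * hαω
    have hM : β * (γ + μ) * (ρ + μ) * (ρ + μ - ν * β * ξ * W) ≠ 0 := by positivity
    have eq3 : α * κ * (1 - S - I - W - J) - ω * κ * W - ν * β * (I + ξ * J) * W - μ * W = 0 := by
      have h0 := key.trans hroot
      exact (mul_eq_zero.mp h0).resolve_right hM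
    have hsum : S + I + W + J ≤ 1 := by
      have h1 : 0 < I + ξ * J := add_pos hIpos (mul_pos hξ hJpos)
      have h2 : 0 < ω * κ * W + ν * β * (I + ξ * J) * W + μ * W := by
        have := mul_pos (mul_pos (mul_pos hν hβ) h1) hW0
        have h2a : 0 < ω * κ * W := by positivity
        have h2b : 0 < μ * W := by positivity
        linarith
      have h3 : 0 < α * κ := mul_pos hα0 hκ
      have h4 : 0 < α * κ * (1 - S - I - W - J) := by linarith
      have h5 : 0 < 1 - S - I - W - J := (mul_pos_iff_of_pos_left h3).mp h4
      linarith
    exact ⟨⟨eq1, eq2, eq3, eq4⟩, hSpos, hIpos, hJpos, hsum⟩
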